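/- For 0 < α < 1 and n > 1, the probability that the point P_n = (k, n−k) of an α-random walk (where k is the number of horizontal steps among the first n) satisfies gcd_b(k, n−k) = 1 equals Σ_{0 ≤ k ≤ n, gcd_b(n, n−k)=1} C(n,k) α^k (1−α)^{n−k}, and this equals f_b(n) + O_α(n^{−1/2+ε}) for any ε > 0, where f_b(n) = Σ_{d^{b1}|n} μ(d)/d^{b2}. -/

import Mathlib

open Finset Real
open scoped Classical

/-- Generalized gcd: the largest positive integer `d` with `d^b1 ∣ m` and `d^b2 ∣ n`. -/
noncomputable def gcdb (b1 b2 : ℕ) (m n : ℤ) : ℕ :=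
  sSup {d : ℕ | 0 < d ∧ (d : ℤ) ^ b1 ∣ m ∧ (d : ℤ) ^ b2 ∣ n}

/-- `f_b(n) = ∑_{d^{b1} ∣ n} μ(d) / d^{b2}`. -/
lemma lcm_pow_dvd {u v x b : ℕ} (hu : u ^ b ∣ x) (hv : v ^ b ∣ x) :
    Nat.lcm u v ^ b ∣ x := by
  rcases eq_or_ne x 0 with rfl | hx
  · simp
  rcases eq_or_ne b 0 with rfl | hb
  · simpa using hu
  have hu0 : u ≠ 0 := by
    rintro rfl; rw [zero_pow hb, zero_dvd_iff] at hu; exact hx hu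
  have hv0 : v ≠ 0 := by
    rintro rfl; rw [zero_pow hb, zero_dvd_iff] at hv; exact hx hv
  have hl0 : Nat.lcm u v ≠ 0 := Nat.lcm_ne_zero hu0 hv0
  rw [← Nat.factorization_le_iff_dvd (pow_ne_zero _ hl0) hx]
  rw [Nat.factorization_pow, Nat.factorization_lcm hu0 hv0]
  have h1 := (Nat.factorization_le_iff_dvd (pow_ne_zero _ hu0) hx).mpr hu
  have h2 := (Nat.factorization_le_iff_dvd (pow_ne_zero _ hv0) hx).mpr hv
  rw [Nat.factorization_pow] at h1 h2
  intro p
  have e : (b • (u.factorization ⊔ v.factorization)) p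
      = max ((b • u.factorization) p) ((b • v.factorization) p) := by
    simp only [Finsupp.smul_apply, Finsupp.sup_apply, smul_eq_mul]
    exact (Nat.mul_max_mul_left b _ _).symm
  rw [e]
  exact max_le (h1 p) (h2 p)

section NT
variable {b1 b2 n k : ℕ}

/-- The defining set of `gcdb b1 b2 n (n-k)` as a ℕ-set, for `k ≤ n`. -/
lemma gcdb_eq_nat (hk : k ≤ n) :
    gcdb b1 b2 (n : ℤ) ((n : ℤ) - (k : ℤ)) =
      sSup {d : ℕ | 0 < d ∧ d ^ b1 ∣ n ∧ d ^ b2 ∣ (n - k)} := by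
  unfold gcdb
  congr 1
  ext d
  have hcast : (n : ℤ) - (k : ℤ) = ((n - k : ℕ) : ℤ) := by
    rw [Nat.cast_sub hk]
  rw [hcast]
  constructor
  · rintro ⟨hd, h1, h2⟩
    refine ⟨hd, ?_, ?_⟩
    · exact_mod_cast h1
    · exact_mod_cast h2
  · rintro ⟨hd, h1, h2⟩
    refine ⟨hd, ?_, ?_⟩
    · exact_mod_cast h1
    · exact_mod_cast h2

lemma moebius_filter_eq (hb1 : 1 ≤ b1) (hb : b1 ≤ b2) (hn : 0 < n) (hk : k ≤ n) :
    ((n.divisors.filter (fun d => d ^ b1 ∣ n)).filter (fun d => d ^ b2 ∣ (n - k)))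
      = (gcdb b1 b2 (n : ℤ) ((n : ℤ) - (k : ℤ))).divisors := by
  classical
  set S : Set ℕ := {d : ℕ | 0 < d ∧ d ^ b1 ∣ n ∧ d ^ b2 ∣ (n - k)} with hS
  have h1S : (1 : ℕ) ∈ S := ⟨one_pos, by simp, by simp⟩
  have hbdd : ∀ d ∈ S, d ≤ n := by
    rintro d ⟨hd, h1, _⟩
    exact le_trans (Nat.le_self_pow (by omega) d) (Nat.le_of_dvd hn h1)
  have hSbdd : BddAbove S := ⟨n, fun d hd => hbdd d hd⟩
  have hg := gcdb_eq_nat (b1 := b1) (b2 := b2) hk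
  set g : ℕ := gcdb b1 b2 (n : ℤ) ((n : ℤ) - (k : ℤ)) with hgdef
  have hgS : g ∈ S := by
    rw [hg]; exact Nat.sSup_mem ⟨1, h1S⟩ hSbdd
  obtain ⟨hgpos, hgb1, hgb2⟩ := hgS
  have hdvdg : ∀ d ∈ S, d ∣ g := by
    rintro d ⟨hd, h1, h2⟩
    have hlcm : Nat.lcm d g ∈ S := by
      refine ⟨Nat.pos_of_ne_zero (Nat.lcm_ne_zero (by omega) (by omega)), ?_, ?_⟩
      · exact lcm_pow_dvd h1 hgb1
      · exact lcm_pow_dvd h2 hgb2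
    have hle : Nat.lcm d g ≤ g := by
      rw [hg]; rw [hg] at hlcm; exact le_csSup hSbdd hlcm
    have hlcmpos : 0 < Nat.lcm d g := hlcm.1
    have heq : Nat.lcm d g = g :=
      le_antisymm hle (Nat.le_of_dvd hlcmpos (Nat.dvd_lcm_right d g))
    exact heq ▸ Nat.dvd_lcm_left d g
  ext d
  simp only [Finset.mem_filter, Nat.mem_divisors]
  constructor
  · rintro ⟨⟨⟨hdn, _⟩, hd1⟩, hd2⟩
    have hdpos : 0 < d := Nat.pos_of_dvd_of_pos hdn hn
    exact ⟨hdvdg d ⟨hdpos, hd1, hd2⟩, by omega⟩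
  · rintro ⟨hdg, _⟩
    have hdn : d ∣ n := hdg.trans ((dvd_pow_self g (by omega)).trans hgb1)
    refine ⟨⟨⟨hdn, by omega⟩, ?_⟩, ?_⟩
    · exact (pow_dvd_pow_of_dvd hdg b1).trans hgb1
    · exact (pow_dvd_pow_of_dvd hdg b2).trans hgb2

end NT

section Decomp
variable {b1 b2 n k : ℕ}

lemma indicator_eq (hb1 : 1 ≤ b1) (hb : b1 ≤ b2) (hn : 0 < n) (hk : k ≤ n) :
    (if gcdb b1 b2 (n : ℤ) ((n : ℤ) - (k : ℤ)) = 1 then (1 : ℝ) else 0)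
      = ∑ d ∈ n.divisors.filter (fun d => d ^ b1 ∣ n),
          (ArithmeticFunction.moebius d : ℝ) * (if d ^ b2 ∣ (n - k) then 1 else 0) := by
  classical
  have h1 : ∑ d ∈ n.divisors.filter (fun d => d ^ b1 ∣ n),
      (ArithmeticFunction.moebius d : ℝ) * (if d ^ b2 ∣ (n - k) then 1 else 0)
      = ∑ d ∈ ((n.divisors.filter (fun d => d ^ b1 ∣ n)).filter (fun d => d ^ b2 ∣ (n - k))),
          (ArithmeticFunction.moebius d : ℝ) := by
    rw [eq_comm, Finset.sum_filter]
    refine Finset.sum_congr rfl (fun d _ => ?_)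
    by_cases hc : d ^ b2 ∣ (n - k) <;> simp [hc]
  rw [h1, moebius_filter_eq hb1 hb hn hk]
  set g : ℕ := gcdb b1 b2 (n : ℤ) ((n : ℤ) - (k : ℤ)) with hgdef
  have h2 : ∑ d ∈ g.divisors, (ArithmeticFunction.moebius d : ℝ)
      = ((ArithmeticFunction.moebius : ArithmeticFunction ℝ) *
          (ArithmeticFunction.zeta : ArithmeticFunction ℝ) : ArithmeticFunction ℝ) g := by
    rw [ArithmeticFunction.coe_mul_zeta_apply]
    refine Finset.sum_congr rfl (fun d _ => ?_)
    simp [ArithmeticFunction.intCoe_apply]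
  rw [h2, ArithmeticFunction.coe_moebius_mul_coe_zeta, ArithmeticFunction.one_apply]


lemma sum_decomp (hb1 : 1 ≤ b1) (hb : b1 ≤ b2) (hn : 0 < n) (α : ℝ) :
    ∑ k ∈ (Finset.range (n + 1)).filter
        (fun k : ℕ => gcdb b1 b2 (n : ℤ) ((n : ℤ) - (k : ℤ)) = 1),
      (n.choose k : ℝ) * α ^ k * (1 - α) ^ (n - k)
    = ∑ d ∈ n.divisors.filter (fun d => d ^ b1 ∣ n),
        (ArithmeticFunction.moebius d : ℝ) *
        ∑ k ∈ (Finset.range (n + 1)).filter (fun k : ℕ => d ^ b2 ∣ (n - k)),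
          (n.choose k : ℝ) * α ^ k * (1 - α) ^ (n - k) := by
  classical
  rw [Finset.sum_filter]
  have step1 : ∀ k ∈ Finset.range (n + 1),
      (if gcdb b1 b2 (n : ℤ) ((n : ℤ) - (k : ℤ)) = 1 then
        (n.choose k : ℝ) * α ^ k * (1 - α) ^ (n - k) else 0)
      = ∑ d ∈ n.divisors.filter (fun d => d ^ b1 ∣ n),
          (ArithmeticFunction.moebius d : ℝ) *
            (if d ^ b2 ∣ (n - k) then (n.choose k : ℝ) * α ^ k * (1 - α) ^ (n - k) else 0) := by
    intro k hk
    have hkn : k ≤ n := by simpa [Nat.lt_succ_iff] using Finset.mem_range.mp hk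
    have := indicator_eq (n := n) (k := k) hb1 hb hn hkn
    calc (if gcdb b1 b2 (n : ℤ) ((n : ℤ) - (k : ℤ)) = 1 then
            (n.choose k : ℝ) * α ^ k * (1 - α) ^ (n - k) else 0)
        = (if gcdb b1 b2 (n : ℤ) ((n : ℤ) - (k : ℤ)) = 1 then (1 : ℝ) else 0) *
            ((n.choose k : ℝ) * α ^ k * (1 - α) ^ (n - k)) := by
          by_cases hc : gcdb b1 b2 (n : ℤ) ((n : ℤ) - (k : ℤ)) = 1 <;> simp [hc]
      _ = (∑ d ∈ n.divisors.filter (fun d => d ^ b1 ∣ n),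
            (ArithmeticFunction.moebius d : ℝ) * (if d ^ b2 ∣ (n - k) then 1 else 0)) *
            ((n.choose k : ℝ) * α ^ k * (1 - α) ^ (n - k)) := by rw [this]
      _ = ∑ d ∈ n.divisors.filter (fun d => d ^ b1 ∣ n),
            (ArithmeticFunction.moebius d : ℝ) *
              (if d ^ b2 ∣ (n - k) then (n.choose k : ℝ) * α ^ k * (1 - α) ^ (n - k) else 0) := by
          rw [Finset.sum_mul]
          refine Finset.sum_congr rfl (fun d _ => ?_)
          by_cases hc : d ^ b2 ∣ (n - k) <;> simp [hc, mul_assoc]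
  rw [Finset.sum_congr rfl step1, Finset.sum_comm]
  refine Finset.sum_congr rfl (fun d _ => ?_)
  rw [Finset.mul_sum, Finset.sum_filter]
  refine Finset.sum_congr rfl (fun x _ => ?_)
  by_cases hc : d ^ b2 ∣ (n - x) <;> simp [hc]

end Decomp

lemma gcdb_swap {b1 b2 : ℕ} (hb : b1 ≤ b2) (n k : ℤ) :
    gcdb b1 b2 k (n - k) = gcdb b1 b2 n (n - k) := by
  unfold gcdb
  congr 1
  ext d
  constructor
  · rintro ⟨hd, h1, h2⟩
    have h3 : (d : ℤ) ^ b1 ∣ n - k := dvd_trans (pow_dvd_pow (d : ℤ) hb) h2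
    exact ⟨hd, by simpa using dvd_add h1 h3, h2⟩
  · rintro ⟨hd, h1, h2⟩
    have h3 : (d : ℤ) ^ b1 ∣ n - k := dvd_trans (pow_dvd_pow (d : ℤ) hb) h2
    refine ⟨hd, ?_, h2⟩
    have := dvd_sub h1 h3
    simpa using this


lemma exp_pow_nat (θ : ℝ) (t : ℕ) :
    Complex.exp ((θ : ℂ) * Complex.I) ^ t = Complex.exp (((t * θ : ℝ) : ℂ) * Complex.I) := by
  rw [← Complex.exp_nat_mul]
  push_cast
  ring_nf

lemma ind_sum {m : ℕ} (hm : 0 < m) (t : ℕ) :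
    ∑ j ∈ Finset.range m, Complex.exp (((2 * π * t / m : ℝ) : ℂ) * Complex.I) ^ j
      = if m ∣ t then (m : ℂ) else 0 := by
  have hmr : (m : ℝ) ≠ 0 := Nat.cast_ne_zero.mpr hm.ne'
  have hmc : (m : ℂ) ≠ 0 := Nat.cast_ne_zero.mpr hm.ne'
  by_cases hdvd : m ∣ t
  · obtain ⟨s, rfl⟩ := hdvd
    have hz : Complex.exp (((2 * π * (m * s : ℕ) / m : ℝ) : ℂ) * Complex.I) = 1 := by
      have harg : (((2 * π * (m * s : ℕ) / m : ℝ) : ℂ) * Complex.I)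
          = ((s : ℤ) : ℂ) * (2 * (π : ℂ) * Complex.I) := by
        push_cast
        field_simp
      rw [harg]
      exact Complex.exp_int_mul_two_pi_mul_I _
    rw [hz]
    simp
  · set z := Complex.exp (((2 * π * t / m : ℝ) : ℂ) * Complex.I) with hzdef
    have hz1 : z ≠ 1 := by
      intro h
      rw [hzdef, Complex.exp_eq_one_iff] at h
      obtain ⟨s, hs⟩ := h
      apply hdvd
      have h2 : ((2 * π * t / m : ℝ) : ℂ) = (((2 * π * s : ℝ)) : ℂ) := by
        have hI : (Complex.I : ℂ) ≠ 0 := Complex.I_ne_zero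
        apply mul_right_cancel₀ hI
        rw [hs]; push_cast; ring
      have h3 : (2 * π * t / m : ℝ) = 2 * π * s := by exact_mod_cast h2
      have h4 : (t : ℝ) = s * m := by
        field_simp at h3
        nlinarith [pi_pos]
      have h5 : (t : ℤ) = s * m := by exact_mod_cast h4
      have h6 : (m : ℤ) ∣ (t : ℤ) := ⟨s, by rw [h5]; ring⟩
      exact_mod_cast h6
    have hzm : z ^ m = 1 := by
      rw [hzdef, ← Complex.exp_nat_mul]
      have : (m : ℂ) * (((2 * π * t / m : ℝ) : ℂ) * Complex.I)
          = ((t : ℤ) : ℂ) * (2 * (π : ℂ) * Complex.I) := by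
        push_cast
        field_simp
      rw [this]
      exact Complex.exp_int_mul_two_pi_mul_I _
    rw [geom_sum_eq hz1, hzm]
    simp [hdvd]

lemma binom_z (α : ℝ) (n : ℕ) (z : ℂ) :
    ∑ k ∈ Finset.range (n + 1), (n.choose k : ℂ) * (α : ℂ) ^ k * ((1 - α : ℝ) : ℂ) ^ (n - k) * z ^ (n - k)
      = ((α : ℂ) + ((1 - α : ℝ) : ℂ) * z) ^ n := by
  rw [add_pow]
  refine Finset.sum_congr rfl (fun k _ => ?_)
  rw [mul_pow]
  ring

lemma T_identity (α : ℝ) (n m : ℕ) (hm : 0 < m) :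
    ((∑ k ∈ (Finset.range (n + 1)).filter (fun k => m ∣ (n - k)),
        (n.choose k : ℝ) * α ^ k * (1 - α) ^ (n - k) : ℝ) : ℂ)
      = (1 / m) * ∑ j ∈ Finset.range m,
          ((α : ℂ) + ((1 - α : ℝ) : ℂ) *
            Complex.exp (((2 * π * j / m : ℝ) : ℂ) * Complex.I)) ^ n := by
  have hmc : (m : ℂ) ≠ 0 := Nat.cast_ne_zero.mpr hm.ne'
  have step1 : ((∑ k ∈ (Finset.range (n + 1)).filter (fun k => m ∣ (n - k)),
        (n.choose k : ℝ) * α ^ k * (1 - α) ^ (n - k) : ℝ) : ℂ)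
      = ∑ k ∈ Finset.range (n + 1), (if m ∣ (n - k) then
          (n.choose k : ℂ) * (α : ℂ) ^ k * ((1 - α : ℝ) : ℂ) ^ (n - k) else 0) := by
    rw [← Finset.sum_filter]
    push_cast
    rfl
  rw [step1]
  have step2 : ∀ k ∈ Finset.range (n + 1),
      (if m ∣ (n - k) then (n.choose k : ℂ) * (α : ℂ) ^ k * ((1 - α : ℝ) : ℂ) ^ (n - k) else 0)
      = (1 / m) * ∑ j ∈ Finset.range m,
          (n.choose k : ℂ) * (α : ℂ) ^ k * ((1 - α : ℝ) : ℂ) ^ (n - k) *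
            Complex.exp (((2 * π * j / m : ℝ) : ℂ) * Complex.I) ^ (n - k) := by
    intro k _
    have hswap : ∀ j : ℕ, Complex.exp (((2 * π * j / m : ℝ) : ℂ) * Complex.I) ^ (n - k)
        = Complex.exp (((2 * π * (n - k : ℕ) / m : ℝ) : ℂ) * Complex.I) ^ j := by
      intro j
      rw [exp_pow_nat, exp_pow_nat]
      congr 2
      push_cast
      ring
    calc (if m ∣ (n - k) then (n.choose k : ℂ) * (α : ℂ) ^ k * ((1 - α : ℝ) : ℂ) ^ (n - k) else 0)
        = (n.choose k : ℂ) * (α : ℂ) ^ k * ((1 - α : ℝ) : ℂ) ^ (n - k) *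
            ((1 / m) * (if m ∣ (n - k) then (m : ℂ) else 0)) := by
          by_cases hc : m ∣ (n - k) <;> simp [hc] <;> field_simp
      _ = (n.choose k : ℂ) * (α : ℂ) ^ k * ((1 - α : ℝ) : ℂ) ^ (n - k) *
            ((1 / m) * ∑ j ∈ Finset.range m,
              Complex.exp (((2 * π * (n - k : ℕ) / m : ℝ) : ℂ) * Complex.I) ^ j) := by
          rw [ind_sum hm (n - k)]
      _ = (1 / m) * ∑ j ∈ Finset.range m,
            (n.choose k : ℂ) * (α : ℂ) ^ k * ((1 - α : ℝ) : ℂ) ^ (n - k) *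
              Complex.exp (((2 * π * j / m : ℝ) : ℂ) * Complex.I) ^ (n - k) := by
          rw [Finset.mul_sum, Finset.mul_sum]
          rw [Finset.mul_sum]
          refine Finset.sum_congr rfl (fun j _ => ?_)
          rw [hswap j]
          ring
  rw [Finset.sum_congr rfl step2, ← Finset.mul_sum, Finset.sum_comm]
  congr 1
  refine Finset.sum_congr rfl (fun j _ => ?_)
  exact binom_z α n _

lemma psi_abs_sq (α θ : ℝ) :
    (‖(α : ℂ) + ((1 - α : ℝ) : ℂ) * Complex.exp ((θ : ℂ) * Complex.I)‖) ^ 2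
      = 1 - 2 * α * (1 - α) * (1 - Real.cos θ) := by
  have h1 : ((α : ℂ) + ((1 - α : ℝ) : ℂ) * Complex.exp ((θ : ℂ) * Complex.I))
      = ((α + (1 - α) * Real.cos θ : ℝ) : ℂ) + (((1 - α) * Real.sin θ : ℝ) : ℂ) * Complex.I := by
    rw [Complex.exp_mul_I, ← Complex.ofReal_cos, ← Complex.ofReal_sin]
    push_cast
    ring
  rw [h1, Complex.sq_norm, Complex.normSq_add_mul_I]
  have hpyth := Real.sin_sq_add_cos_sq θ
  linear_combination (1 - α) ^ 2 * hpyth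

lemma psi_abs_le {α : ℝ} (hα0 : 0 < α) (hα1 : α < 1) {m u : ℕ} (hm : 0 < m)
    (h2u : 2 * u ≤ m) :
    ‖(α : ℂ) + ((1 - α : ℝ) : ℂ) *
        Complex.exp (((2 * π * u / m : ℝ) : ℂ) * Complex.I)‖
      ≤ Real.exp (-(8 * α * (1 - α)) * (u ^ 2 / m ^ 2)) := by
  set θ : ℝ := 2 * π * u / m with hθ
  have hmr : (0 : ℝ) < m := by exact_mod_cast hm
  have hθ0 : 0 ≤ θ := by
    have : (0:ℝ) ≤ (u:ℝ) := Nat.cast_nonneg u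
    positivity
  have hθπ : θ ≤ π := by
    rw [hθ, div_le_iff₀ hmr]
    have h2u' : (2 * u : ℝ) ≤ m := by exact_mod_cast h2u
    nlinarith [pi_pos]
  have hcos : Real.cos θ ≤ 1 - 2 / π ^ 2 * θ ^ 2 := by
    apply Real.cos_le_one_sub_mul_cos_sq
    rw [abs_of_nonneg hθ0]; exact hθπ
  have hθsq : 2 / π ^ 2 * θ ^ 2 = 8 * ((u:ℝ) ^ 2 / (m:ℝ) ^ 2) := by
    rw [hθ]
    field_simp
    ring
  have habs2 := psi_abs_sq α θ
  set A := ‖(α : ℂ) + ((1 - α : ℝ) : ℂ) * Complex.exp ((θ : ℂ) * Complex.I)‖ with hA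
  have hAnn : 0 ≤ A := norm_nonneg _
  have hbound : A ^ 2 ≤ Real.exp (-(16 * α * (1 - α)) * ((u:ℝ) ^ 2 / (m:ℝ) ^ 2)) := by
    have h1 : A ^ 2 ≤ 1 - 16 * α * (1 - α) * ((u:ℝ) ^ 2 / (m:ℝ) ^ 2) := by
      rw [habs2]
      nlinarith [hcos, hθsq, mul_pos hα0 (by linarith : (0:ℝ) < 1 - α)]
    calc A ^ 2 ≤ 1 - 16 * α * (1 - α) * ((u:ℝ) ^ 2 / (m:ℝ) ^ 2) := h1
      _ ≤ Real.exp (-(16 * α * (1 - α)) * ((u:ℝ) ^ 2 / (m:ℝ) ^ 2)) := by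
          have := Real.add_one_le_exp (-(16 * α * (1 - α)) * ((u:ℝ) ^ 2 / (m:ℝ) ^ 2))
          linarith
  have hexp2 : Real.exp (-(8 * α * (1 - α)) * ((u:ℝ) ^ 2 / (m:ℝ) ^ 2)) ^ 2
      = Real.exp (-(16 * α * (1 - α)) * ((u:ℝ) ^ 2 / (m:ℝ) ^ 2)) := by
    rw [sq, ← Real.exp_add]
    congr 1
    ring
  have := hbound.trans_eq hexp2.symm
  exact (pow_le_pow_iff_left₀ hAnn (Real.exp_nonneg _) (by norm_num)).mp this

lemma geom_tail {q : ℝ} (h0 : 0 ≤ q) (h1 : q < 1) (N : ℕ) :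
    ∑ i ∈ Finset.range N, q ^ i ≤ 1 / (1 - q) := by
  have h1q : (0:ℝ) < 1 - q := by linarith
  have heq : ∑ i ∈ Finset.range N, q ^ i = (1 - q ^ N) / (1 - q) := by
    rw [geom_sum_eq h1.ne N, ← neg_div_neg_eq]
    ring_nf
  rw [heq, div_le_div_iff₀ h1q h1q]
  nlinarith [pow_nonneg h0 N]

lemma exp_geom_ratio {b : ℝ} (hb : 0 < b) :
    Real.exp (-b) / (1 - Real.exp (-b)) ≤ 1 / b := by
  have hq1 : Real.exp (-b) < 1 := by
    rw [Real.exp_lt_one_iff]; linarith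
  have hkey : (b + 1) * Real.exp (-b) ≤ 1 := by
    have h := Real.add_one_le_exp b
    have hpos := Real.exp_pos (-b)
    have : (b + 1) * Real.exp (-b) ≤ Real.exp b * Real.exp (-b) := by nlinarith
    rwa [← Real.exp_add, add_neg_cancel, Real.exp_zero] at this
  rw [div_le_div_iff₀ (by linarith) hb]
  nlinarith [Real.exp_pos (-b)]

lemma sum_exp_sq_le1 {a : ℝ} (ha : 0 < a) (m : ℕ) :
    ∑ j ∈ Finset.Ico 1 m, Real.exp (-a * (j : ℝ) ^ 2) ≤ 1 / a := by
  set q : ℝ := Real.exp (-a) with hq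
  have hq0 : 0 < q := Real.exp_pos _
  have hq1 : q < 1 := by rw [hq, Real.exp_lt_one_iff]; linarith
  have hterm : ∀ j ∈ Finset.Ico 1 m, Real.exp (-a * (j : ℝ) ^ 2) ≤ q ^ j := by
    intro j hj
    have hj1 : 1 ≤ j := (Finset.mem_Ico.mp hj).1
    have hj1' : (1 : ℝ) ≤ (j : ℝ) := by exact_mod_cast hj1
    have hjj : (j:ℝ) ≤ (j:ℝ)^2 := by nlinarith
    have : -a * (j : ℝ) ^ 2 ≤ (j : ℝ) * (-a) := by nlinarith [mul_le_mul_of_nonneg_left hjj ha.le]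
    calc Real.exp (-a * (j : ℝ) ^ 2) ≤ Real.exp ((j : ℝ) * (-a)) := Real.exp_le_exp.mpr this
      _ = q ^ j := by rw [hq, ← Real.exp_nat_mul]
  calc ∑ j ∈ Finset.Ico 1 m, Real.exp (-a * (j : ℝ) ^ 2) ≤ ∑ j ∈ Finset.Ico 1 m, q ^ j :=
        Finset.sum_le_sum hterm
    _ = ∑ i ∈ Finset.range (m - 1), q ^ (1 + i) := Finset.sum_Ico_eq_sum_range _ _ _
    _ = q * ∑ i ∈ Finset.range (m - 1), q ^ i := by
        rw [Finset.mul_sum]; exact Finset.sum_congr rfl (fun i _ => by rw [pow_add, pow_one])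
    _ ≤ q * (1 / (1 - q)) := by
        exact mul_le_mul_of_nonneg_left (geom_tail hq0.le hq1 _) hq0.le
    _ = q / (1 - q) := by ring
    _ ≤ 1 / a := exp_geom_ratio ha

lemma sum_exp_sq_le2 {a : ℝ} (ha : 0 < a) (m : ℕ) :
    ∑ j ∈ Finset.Ico 1 m, Real.exp (-a * (j : ℝ) ^ 2) ≤ 2 / Real.sqrt a + 1 := by
  set s : ℝ := Real.sqrt a with hs
  have hs0 : 0 < s := Real.sqrt_pos.mpr ha
  have hssq : s ^ 2 = a := Real.sq_sqrt ha.le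
  set J : ℕ := ⌊1 / s⌋₊ + 1 with hJ
  have hJ1 : 1 ≤ J := Nat.le_add_left 1 _
  have hJge : 1 / s ≤ (J : ℝ) := by
    have := Nat.lt_floor_add_one (1 / s)
    push_cast [hJ]
    linarith
  have hJle : (J : ℝ) ≤ 1 / s + 1 := by
    have := Nat.floor_le (by positivity : (0:ℝ) ≤ 1 / s)
    push_cast [hJ]
    linarith
  set M' : ℕ := max m (J + 1) with hM'
  have hsub : Finset.Ico 1 m ⊆ Finset.Ico 1 M' := by
    apply Finset.Ico_subset_Ico le_rfl (le_max_left _ _)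
  have hnn : ∀ j ∈ Finset.Ico 1 M', 0 ≤ Real.exp (-a * (j : ℝ) ^ 2) := fun j _ => (Real.exp_pos _).le
  have hsplit : Finset.Ico 1 M' = Finset.Ico 1 (J + 1) ∪ Finset.Ico (J + 1) M' := by
    rw [Finset.Ico_union_Ico_eq_Ico (by omega) (le_max_right _ _)]
  have hdisj : Disjoint (Finset.Ico 1 (J + 1)) (Finset.Ico (J + 1) M') :=
    Finset.Ico_disjoint_Ico_consecutive 1 (J + 1) M'
  have h1 : ∑ j ∈ Finset.Ico 1 (J + 1), Real.exp (-a * (j : ℝ) ^ 2) ≤ J := by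
    calc ∑ j ∈ Finset.Ico 1 (J + 1), Real.exp (-a * (j : ℝ) ^ 2)
        ≤ ∑ _j ∈ Finset.Ico 1 (J + 1), (1 : ℝ) := by
          refine Finset.sum_le_sum (fun j _ => ?_)
          rw [show (1:ℝ) = Real.exp 0 by rw [Real.exp_zero]]
          apply Real.exp_le_exp.mpr
          have : (0:ℝ) ≤ (j:ℝ)^2 := sq_nonneg _
          nlinarith
      _ = J := by simp [Nat.card_Ico]
  set q' : ℝ := Real.exp (-(a * J)) with hq'
  have hq'0 : 0 < q' := Real.exp_pos _
  have hq'1 : q' < 1 := by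
    rw [hq', Real.exp_lt_one_iff]
    have : (0:ℝ) < (J:ℝ) := by exact_mod_cast hJ1
    nlinarith
  have h2 : ∑ j ∈ Finset.Ico (J + 1) M', Real.exp (-a * (j : ℝ) ^ 2) ≤ 1 / (a * J) := by
    have hterm : ∀ j ∈ Finset.Ico (J + 1) M', Real.exp (-a * (j : ℝ) ^ 2) ≤ q' ^ j := by
      intro j hj
      have hjJ : J + 1 ≤ j := (Finset.mem_Ico.mp hj).1
      have hjJ' : (J : ℝ) ≤ (j : ℝ) := by exact_mod_cast Nat.le_of_succ_le hjJ
      have hjnn : (0:ℝ) ≤ (j:ℝ) := Nat.cast_nonneg _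
      have hjj : (J:ℝ) * j ≤ (j:ℝ)^2 := by nlinarith
      have : -a * (j : ℝ) ^ 2 ≤ (j : ℝ) * (-(a * J)) := by
        nlinarith [mul_le_mul_of_nonneg_left hjj ha.le]
      calc Real.exp (-a * (j : ℝ) ^ 2) ≤ Real.exp ((j : ℝ) * (-(a * J))) := Real.exp_le_exp.mpr this
        _ = q' ^ j := by rw [hq', ← Real.exp_nat_mul]
    have haJ : 0 < a * J := by
      have : (0:ℝ) < (J:ℝ) := by exact_mod_cast hJ1
      positivity
    calc ∑ j ∈ Finset.Ico (J + 1) M', Real.exp (-a * (j : ℝ) ^ 2)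
        ≤ ∑ j ∈ Finset.Ico (J + 1) M', q' ^ j := Finset.sum_le_sum hterm
      _ = ∑ i ∈ Finset.range (M' - (J + 1)), q' ^ (J + 1 + i) := Finset.sum_Ico_eq_sum_range _ _ _
      _ = q' ^ (J + 1) * ∑ i ∈ Finset.range (M' - (J + 1)), q' ^ i := by
          rw [Finset.mul_sum]; exact Finset.sum_congr rfl (fun i _ => by rw [pow_add])
      _ ≤ q' ^ 1 * (1 / (1 - q')) := by
          apply mul_le_mul (pow_le_pow_of_le_one hq'0.le hq'1.le (by omega))
            (geom_tail hq'0.le hq'1 _) (by positivity) (by positivity)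
      _ = q' / (1 - q') := by ring
      _ ≤ 1 / (a * J) := exp_geom_ratio haJ
  have hcombine : ∑ j ∈ Finset.Ico 1 m, Real.exp (-a * (j : ℝ) ^ 2) ≤ (J : ℝ) + 1 / (a * J) := by
    calc ∑ j ∈ Finset.Ico 1 m, Real.exp (-a * (j : ℝ) ^ 2)
        ≤ ∑ j ∈ Finset.Ico 1 M', Real.exp (-a * (j : ℝ) ^ 2) :=
          Finset.sum_le_sum_of_subset_of_nonneg hsub (fun j hj _ => hnn j hj)
      _ = ∑ j ∈ Finset.Ico 1 (J + 1), Real.exp (-a * (j : ℝ) ^ 2)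
          + ∑ j ∈ Finset.Ico (J + 1) M', Real.exp (-a * (j : ℝ) ^ 2) := by
          rw [hsplit, Finset.sum_union hdisj]
      _ ≤ (J : ℝ) + 1 / (a * J) := add_le_add h1 h2
  have hlast : 1 / (a * (J:ℝ)) ≤ 1 / s := by
    have hJr : (0:ℝ) < (J:ℝ) := by exact_mod_cast hJ1
    rw [div_le_div_iff₀ (by positivity) hs0]
    -- s ≤ a * J : since J ≥ 1/s, a*J ≥ a/s = s
    have h1' : a / s ≤ a * J := by
      rw [div_le_iff₀ hs0]
      have := mul_le_mul_of_nonneg_left hJge ha.le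
      calc a = a * (1/s) * s := by field_simp
        _ ≤ a * J * s := by nlinarith [mul_le_mul_of_nonneg_left hJge ha.le]
    have has : a / s = s := by
      rw [← hssq]; field_simp
    nlinarith
  calc ∑ j ∈ Finset.Ico 1 m, Real.exp (-a * (j : ℝ) ^ 2) ≤ (J : ℝ) + 1 / (a * J) := hcombine
    _ ≤ (1 / s + 1) + 1 / s := add_le_add hJle hlast
    _ = 2 / s + 1 := by ring

lemma psi_pow_le {α : ℝ} (hα0 : 0 < α) (hα1 : α < 1) {n m j : ℕ} (hm : 0 < m)
    (hj : j ∈ Finset.Ico 1 m) :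
    ‖(α : ℂ) + ((1 - α : ℝ) : ℂ) *
        Complex.exp (((2 * π * j / m : ℝ) : ℂ) * Complex.I)‖ ^ n
      ≤ Real.exp (-(8 * α * (1 - α) * n / (m:ℝ)^2) * (j : ℝ) ^ 2)
        + Real.exp (-(8 * α * (1 - α) * n / (m:ℝ)^2) * ((m - j : ℕ) : ℝ) ^ 2) := by
  obtain ⟨hj1, hjm⟩ := Finset.mem_Ico.mp hj
  have habs_pow : ∀ u : ℕ, 2 * u ≤ m →
      ‖(α : ℂ) + ((1 - α : ℝ) : ℂ) *
        Complex.exp (((2 * π * u / m : ℝ) : ℂ) * Complex.I)‖ ^ n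
      ≤ Real.exp (-(8 * α * (1 - α) * n / (m:ℝ)^2) * (u : ℝ) ^ 2) := by
    intro u h2u
    have h1 := psi_abs_le hα0 hα1 hm h2u
    calc ‖(α : ℂ) + ((1 - α : ℝ) : ℂ) *
          Complex.exp (((2 * π * u / m : ℝ) : ℂ) * Complex.I)‖ ^ n
        ≤ Real.exp (-(8 * α * (1 - α)) * ((u:ℝ) ^ 2 / (m:ℝ) ^ 2)) ^ n :=
          pow_le_pow_left₀ (norm_nonneg _) h1 n
      _ = Real.exp (-(8 * α * (1 - α) * n / (m:ℝ)^2) * (u : ℝ) ^ 2) := by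
          rw [← Real.exp_nat_mul]
          congr 1
          field_simp
  by_cases hc : 2 * j ≤ m
  · exact le_add_of_nonneg_right (Real.exp_pos _).le |>.trans_eq' (by
      exact le_antisymm (le_refl _) (le_refl _)) |>.trans' (habs_pow j hc) |>.trans
      (le_refl _)
  · -- use m - j
    have h2u : 2 * (m - j) ≤ m := by omega
    have hcast : ((m - j : ℕ) : ℝ) = (m : ℝ) - (j : ℝ) := by
      rw [Nat.cast_sub hjm.le]
    have hmr : (0:ℝ) < m := by exact_mod_cast hm
    have hcos : Real.cos (2 * π * j / m) = Real.cos (2 * π * (m - j : ℕ) / m) := by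
      have harg : 2 * π * ((m - j : ℕ):ℝ) / m = 2 * π - 2 * π * j / m := by
        rw [hcast]; field_simp
      rw [harg, Real.cos_two_pi_sub]
    have habseq : ‖(α : ℂ) + ((1 - α : ℝ) : ℂ) *
          Complex.exp (((2 * π * j / m : ℝ) : ℂ) * Complex.I)‖
        = ‖(α : ℂ) + ((1 - α : ℝ) : ℂ) *
          Complex.exp (((2 * π * (m - j : ℕ) / m : ℝ) : ℂ) * Complex.I)‖ := by
      have e1 := psi_abs_sq α (2 * π * j / m)
      have e2 := psi_abs_sq α (2 * π * (m - j : ℕ) / m)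
      have hsq : ‖(α : ℂ) + ((1 - α : ℝ) : ℂ) *
            Complex.exp (((2 * π * j / m : ℝ) : ℂ) * Complex.I)‖ ^ 2
          = ‖(α : ℂ) + ((1 - α : ℝ) : ℂ) *
            Complex.exp (((2 * π * (m - j : ℕ) / m : ℝ) : ℂ) * Complex.I)‖ ^ 2 := by
        rw [e1, e2, hcos]
      have hA1 := norm_nonneg ((α : ℂ) + ((1 - α : ℝ) : ℂ) *
            Complex.exp (((2 * π * j / m : ℝ) : ℂ) * Complex.I))
      have hA2 := norm_nonneg ((α : ℂ) + ((1 - α : ℝ) : ℂ) *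
            Complex.exp (((2 * π * (m - j : ℕ) / m : ℝ) : ℂ) * Complex.I))
      nlinarith [hsq, hA1, hA2]
    rw [habseq]
    exact le_add_of_nonneg_left (Real.exp_pos _).le |>.trans'
      (habs_pow (m - j) h2u)

lemma sum_reflect (m : ℕ) (f : ℕ → ℝ) :
    ∑ j ∈ Finset.Ico 1 m, f (m - j) = ∑ j ∈ Finset.Ico 1 m, f j := by
  apply Finset.sum_nbij' (i := fun j => m - j) (j := fun j => m - j)
  · intro a ha
    rw [Finset.mem_Ico] at *
    omega
  · intro a ha
    rw [Finset.mem_Ico] at *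
    omega
  · intro a ha
    rw [Finset.mem_Ico] at ha
    omega
  · intro a ha
    rw [Finset.mem_Ico] at ha
    omega
  · intro a ha
    rfl

lemma fourier_T {α : ℝ} (hα0 : 0 < α) (hα1 : α < 1) (n m : ℕ) (hn : 1 ≤ n) (hm : 2 ≤ m) :
    |(∑ k ∈ (Finset.range (n + 1)).filter (fun k => m ∣ (n - k)),
        (n.choose k : ℝ) * α ^ k * (1 - α) ^ (n - k)) - 1 / m|
      ≤ (6 / Real.sqrt (8 * α * (1 - α))) / Real.sqrt n := by
  have hm0 : 0 < m := by omega
  have hmr : (0:ℝ) < m := by exact_mod_cast hm0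
  have hnr : (0:ℝ) < n := by exact_mod_cast hn
  have hβ : (0:ℝ) < 1 - α := by linarith
  set c : ℝ := 8 * α * (1 - α) with hc
  have hc0 : (0:ℝ) < c := by positivity
  set T : ℝ := ∑ k ∈ (Finset.range (n + 1)).filter (fun k => m ∣ (n - k)),
      (n.choose k : ℝ) * α ^ k * (1 - α) ^ (n - k) with hT
  -- complex identity
  set ψ : ℕ → ℂ := fun j => ((α : ℂ) + ((1 - α : ℝ) : ℂ) *
      Complex.exp (((2 * π * j / m : ℝ) : ℂ) * Complex.I)) with hψ
  have hid : ((T - 1 / m : ℝ) : ℂ) = (1 / m) * ∑ j ∈ Finset.Ico 1 m, ψ j ^ n := by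
    have h0 : ψ 0 = 1 := by
      simp only [hψ]
      norm_num
    have hsum : ∑ j ∈ Finset.range m, ψ j ^ n = 1 + ∑ j ∈ Finset.Ico 1 m, ψ j ^ n := by
      rw [Finset.range_eq_Ico, Finset.sum_eq_sum_Ico_succ_bot hm0, h0, one_pow]
    have := T_identity α n m hm0
    rw [← hT] at this
    push_cast
    rw [this, hsum]
    have hmc : (m:ℂ) ≠ 0 := Nat.cast_ne_zero.mpr hm0.ne'
    field_simp
    ring
  -- abs bound
  have habs : |T - 1 / m| ≤ (1 / m) * ∑ j ∈ Finset.Ico 1 m, ‖ψ j‖ ^ n := by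
    have h1 : |T - 1 / m| = ‖((T - 1 / m : ℝ) : ℂ)‖ := (Complex.norm_real _).symm
    rw [h1, hid, norm_mul]
    have h2 : ‖(1:ℂ) / m‖ = 1 / m := by
      rw [norm_div, norm_one, Complex.norm_natCast]
    rw [h2]
    apply mul_le_mul_of_nonneg_left _ (by positivity)
    calc ‖∑ j ∈ Finset.Ico 1 m, ψ j ^ n‖
        ≤ ∑ j ∈ Finset.Ico 1 m, ‖ψ j ^ n‖ := norm_sum_le _ _
      _ = ∑ j ∈ Finset.Ico 1 m, ‖ψ j‖ ^ n := by
          exact Finset.sum_congr rfl (fun j _ => norm_pow _ _)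
  -- termwise bound and reflection
  set a : ℝ := c * n / (m:ℝ)^2 with ha
  have ha0 : 0 < a := by positivity
  have hsum2 : ∑ j ∈ Finset.Ico 1 m, ‖ψ j‖ ^ n
      ≤ 2 * ∑ j ∈ Finset.Ico 1 m, Real.exp (-a * (j:ℝ)^2) := by
    calc ∑ j ∈ Finset.Ico 1 m, ‖ψ j‖ ^ n
        ≤ ∑ j ∈ Finset.Ico 1 m,
            (Real.exp (-a * (j:ℝ)^2) + Real.exp (-a * ((m - j : ℕ):ℝ)^2)) := by
          refine Finset.sum_le_sum (fun j hj => ?_)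
          have := psi_pow_le hα0 hα1 hm0 hj (n := n)
          have harg : ∀ u : ℝ, -(8 * α * (1 - α) * n / (m:ℝ)^2) * u^2 = -a * u^2 := by
            intro u; rw [ha, hc]
          simp only [harg] at this
          exact this
      _ = ∑ j ∈ Finset.Ico 1 m, Real.exp (-a * (j:ℝ)^2)
          + ∑ j ∈ Finset.Ico 1 m, Real.exp (-a * ((m - j : ℕ):ℝ)^2) := Finset.sum_add_distrib
      _ = 2 * ∑ j ∈ Finset.Ico 1 m, Real.exp (-a * (j:ℝ)^2) := by
          rw [sum_reflect m (fun u => Real.exp (-a * (u:ℝ)^2))]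
          ring
  -- final case analysis
  have hfinal : (1 / m) * (2 * ∑ j ∈ Finset.Ico 1 m, Real.exp (-a * (j:ℝ)^2))
      ≤ 6 / Real.sqrt (c * n) := by
    rcases le_or_gt (m : ℝ) (Real.sqrt (c * n)) with hcase | hcase
    · have hG := sum_exp_sq_le1 ha0 m
      have h1a : 1 / a = (m:ℝ)^2 / (c * n) := by
        rw [ha]; field_simp
      have hcn : (0:ℝ) < c * n := by positivity
      have hscn : (0:ℝ) < Real.sqrt (c * n) := Real.sqrt_pos.mpr hcn
      have hsq : Real.sqrt (c * n) ^ 2 = c * n := Real.sq_sqrt hcn.le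
      calc (1 / m) * (2 * ∑ j ∈ Finset.Ico 1 m, Real.exp (-a * (j:ℝ)^2))
          ≤ (1 / m) * (2 * (1 / a)) := by
            apply mul_le_mul_of_nonneg_left _ (by positivity)
            linarith
        _ = 2 * (m:ℝ) / (c * n) := by rw [h1a]; field_simp
        _ ≤ 2 * Real.sqrt (c * n) / (c * n) := by
            apply (div_le_div_iff_of_pos_right hcn).mpr
            linarith
        _ ≤ 6 / Real.sqrt (c * n) := by
            rw [div_le_div_iff₀ hcn hscn]
            nlinarith [hscn, hsq]
    · have hG := sum_exp_sq_le2 ha0 m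
      have hcn : (0:ℝ) < c * n := by positivity
      have hscn : (0:ℝ) < Real.sqrt (c * n) := Real.sqrt_pos.mpr hcn
      have hsa : Real.sqrt a = Real.sqrt (c * n) / m := by
        rw [ha, show c * (n:ℝ) / (m:ℝ)^2 = (c * n) * ((1:ℝ)/m)^2 by field_simp,
          Real.sqrt_mul (by positivity), Real.sqrt_sq (by positivity)]
        field_simp
      calc (1 / m) * (2 * ∑ j ∈ Finset.Ico 1 m, Real.exp (-a * (j:ℝ)^2))
          ≤ (1 / m) * (2 * (2 / Real.sqrt a + 1)) := by
            apply mul_le_mul_of_nonneg_left _ (by positivity)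
            linarith
        _ = 4 / (m * Real.sqrt a) + 2 / m := by
            have hsa0 : (0:ℝ) < Real.sqrt a := Real.sqrt_pos.mpr ha0
            field_simp
            ring
        _ = 4 / Real.sqrt (c * n) + 2 / m := by
            rw [hsa]
            congr 2
            field_simp
        _ ≤ 4 / Real.sqrt (c * n) + 2 / Real.sqrt (c * n) := by
            have : 2 / (m:ℝ) ≤ 2 / Real.sqrt (c * n) := by
              apply div_le_div_of_nonneg_left (by norm_num) hscn hcase.le
            linarith
        _ = 6 / Real.sqrt (c * n) := by ring
  have hend : 6 / Real.sqrt (c * n) = (6 / Real.sqrt c) / Real.sqrt n := by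
    rw [Real.sqrt_mul hc0.le]
    field_simp
  calc |T - 1 / m| ≤ (1 / m) * ∑ j ∈ Finset.Ico 1 m, ‖ψ j‖ ^ n := habs
    _ ≤ (1 / m) * (2 * ∑ j ∈ Finset.Ico 1 m, Real.exp (-a * (j:ℝ)^2)) := by
        apply mul_le_mul_of_nonneg_left hsum2 (by positivity)
    _ ≤ 6 / Real.sqrt (c * n) := hfinal
    _ = (6 / Real.sqrt c) / Real.sqrt n := hend


lemma claim_small {ε : ℝ} (hε : 0 < ε) {p a : ℕ} (hp : 2 ≤ p) :
    (a + 1 : ℝ) ≤ (1 + 1 / (ε * Real.log 2)) * ((p:ℝ) ^ a) ^ ε := by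
  have hlog2 : 0 < Real.log 2 := Real.log_pos (by norm_num)
  have hel : 0 < ε * Real.log 2 := by positivity
  set t : ℝ := a * (ε * Real.log 2) with ht
  have ht0 : 0 ≤ t := by positivity
  have hexp : ((2:ℝ) ^ a) ^ ε = Real.exp t := by
    rw [Real.rpow_def_of_pos (by positivity), Real.log_pow]
    congr 1
    rw [ht]; ring
  have hple : ((2:ℝ) ^ a) ^ ε ≤ ((p:ℝ) ^ a) ^ ε := by
    apply Real.rpow_le_rpow (by positivity) _ hε.le
    apply pow_le_pow_left₀ (by norm_num)
    exact_mod_cast hp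
  have h1 : (a + 1 : ℝ) ≤ (1 + 1 / (ε * Real.log 2)) * Real.exp t := by
    have hte := Real.add_one_le_exp t
    have he1 : (1:ℝ) ≤ Real.exp t := by
      rw [show (1:ℝ) = Real.exp 0 by simp]; exact Real.exp_le_exp.mpr ht0
    have key : (a + 1 : ℝ) * (ε * Real.log 2) ≤ (ε * Real.log 2 + 1) * Real.exp t := by
      have h2 : ε * Real.log 2 ≤ ε * Real.log 2 * Real.exp t :=
        le_mul_of_one_le_right hel.le he1
      nlinarith
    rw [← sub_nonneg]
    have expand : (1 + 1 / (ε * Real.log 2)) * Real.exp t - (a + 1)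
        = ((ε * Real.log 2 + 1) * Real.exp t - (a + 1) * (ε * Real.log 2)) / (ε * Real.log 2) := by
      field_simp
    rw [expand]
    apply div_nonneg _ hel.le
    linarith
  calc (a + 1 : ℝ) ≤ (1 + 1 / (ε * Real.log 2)) * Real.exp t := h1
    _ = (1 + 1 / (ε * Real.log 2)) * ((2:ℝ) ^ a) ^ ε := by rw [hexp]
    _ ≤ (1 + 1 / (ε * Real.log 2)) * ((p:ℝ) ^ a) ^ ε := by
        apply mul_le_mul_of_nonneg_left hple
        positivity

lemma claim_big {ε : ℝ} (hε : 0 < ε) {p a : ℕ} (hp : 0 < p) (h2 : (2:ℝ) ≤ (p:ℝ) ^ ε) :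
    (a + 1 : ℝ) ≤ ((p:ℝ) ^ a) ^ ε := by
  have hpr : (0:ℝ) < p := by exact_mod_cast hp
  have h1 : ((p:ℝ) ^ a) ^ ε = ((p:ℝ) ^ ε) ^ a := by
    rw [← Real.rpow_natCast (p:ℝ) a, ← Real.rpow_natCast ((p:ℝ) ^ ε) a,
      ← Real.rpow_mul hpr.le, ← Real.rpow_mul hpr.le]
    congr 1
    ring
  rw [h1]
  have h2a : ((2:ℝ)) ^ a ≤ ((p:ℝ) ^ ε) ^ a := pow_le_pow_left₀ (by norm_num) h2 a
  have h3 : (a + 1 : ℝ) ≤ (2:ℝ) ^ a := by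
    have := Nat.lt_two_pow_self (n := a)
    have : (a + 1 : ℕ) ≤ 2 ^ a := this
    exact_mod_cast this
  linarith

lemma tau_bound {ε : ℝ} (hε : 0 < ε) :
    ∃ C2 : ℝ, 1 ≤ C2 ∧ ∀ n : ℕ, n ≠ 0 → (n.divisors.card : ℝ) ≤ C2 * (n : ℝ) ^ ε := by
  classical
  set M : ℝ := 1 + 1 / (ε * Real.log 2) with hM
  have hlog2 : 0 < Real.log 2 := Real.log_pos (by norm_num)
  have hM1 : 1 ≤ M := by
    rw [hM]
    have : 0 ≤ 1 / (ε * Real.log 2) := by positivity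
    linarith
  set N : ℕ := ⌈(2:ℝ) ^ (1 / ε)⌉₊ with hN
  refine ⟨max 1 (M ^ (N + 1)), le_max_left _ _, fun n hn => ?_⟩
  have hcard : (n.divisors.card : ℝ) = ∏ p ∈ n.primeFactors, ((n.factorization p : ℝ) + 1) := by
    rw [Nat.card_divisors hn]
    push_cast
    rfl
  have hnfact : (n : ℝ) = ∏ p ∈ n.primeFactors, (p:ℝ) ^ (n.factorization p) := by
    conv_lhs => rw [← Nat.factorization_prod_pow_eq_self hn]
    rw [Finsupp.prod, Nat.support_factorization]
    push_cast
    rfl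
  have hrpow : (n : ℝ) ^ ε = ∏ p ∈ n.primeFactors, ((p:ℝ) ^ (n.factorization p)) ^ ε := by
    rw [hnfact, Real.finset_prod_rpow _ _ (fun p _ => by positivity) ε]
  have hstepA : (n.divisors.card : ℝ)
      ≤ ∏ p ∈ n.primeFactors,
          ((if (p:ℝ) ^ ε < 2 then M else 1) * ((p:ℝ) ^ (n.factorization p)) ^ ε) := by
    rw [hcard]
    apply Finset.prod_le_prod (fun p _ => by positivity)
    intro p hp
    have hprime : p.Prime := Nat.prime_of_mem_primeFactors hp
    have hp2 : 2 ≤ p := hprime.two_le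
    by_cases hsmall : (p:ℝ) ^ ε < 2
    · simp only [hsmall, if_true]
      exact claim_small hε hp2
    · simp only [hsmall, if_false, one_mul]
      exact claim_big hε (by omega) (le_of_not_gt hsmall)
  have hstepB : ∏ p ∈ n.primeFactors,
        ((if (p:ℝ) ^ ε < 2 then M else 1) * ((p:ℝ) ^ (n.factorization p)) ^ ε)
      = (∏ p ∈ n.primeFactors, (if (p:ℝ) ^ ε < 2 then M else 1)) * (n : ℝ) ^ ε := by
    rw [Finset.prod_mul_distrib, hrpow]
  have hstepC : ∏ p ∈ n.primeFactors, (if (p:ℝ) ^ ε < 2 then M else 1) ≤ M ^ (N + 1) := by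
    have hsubset : n.primeFactors.filter (fun p : ℕ => (p:ℝ) ^ ε < 2) ⊆ Finset.range (N + 1) := by
      intro p hp
      rw [Finset.mem_filter] at hp
      rw [Finset.mem_range]
      have hprime : p.Prime := Nat.prime_of_mem_primeFactors hp.1
      have hple : (p:ℝ) ≤ (2:ℝ) ^ (1 / ε) := by
        by_contra hcon
        push_neg at hcon
        have h2 : ((2:ℝ) ^ (1 / ε)) ^ ε < (p:ℝ) ^ ε :=
          Real.rpow_lt_rpow (by positivity) hcon hε
        rw [← Real.rpow_mul (by norm_num), one_div_mul_cancel hε.ne', Real.rpow_one] at h2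
        linarith [hp.2]
      have : p ≤ N := by
        have h3 : ((p:ℕ):ℝ) ≤ (N:ℝ) := le_trans hple (Nat.le_ceil _)
        exact_mod_cast h3
      omega
    calc ∏ p ∈ n.primeFactors, (if (p:ℝ) ^ ε < 2 then M else 1)
        = ∏ p ∈ n.primeFactors.filter (fun p : ℕ => (p:ℝ) ^ ε < 2), M := by
          rw [Finset.prod_ite, Finset.prod_const, Finset.prod_const, one_pow, mul_one]
      _ = M ^ (n.primeFactors.filter (fun p : ℕ => (p:ℝ) ^ ε < 2)).card := Finset.prod_const M
      _ ≤ M ^ (N + 1) := by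
          apply pow_le_pow_right₀ hM1
          calc (n.primeFactors.filter (fun p : ℕ => (p:ℝ) ^ ε < 2)).card
              ≤ (Finset.range (N + 1)).card := Finset.card_le_card hsubset
            _ = N + 1 := Finset.card_range _
  calc (n.divisors.card : ℝ)
      ≤ (∏ p ∈ n.primeFactors, (if (p:ℝ) ^ ε < 2 then M else 1)) * (n : ℝ) ^ ε := by
        rw [← hstepB]; exact hstepA
    _ ≤ M ^ (N + 1) * (n : ℝ) ^ ε := by
        apply mul_le_mul_of_nonneg_right hstepC (by positivity)
    _ ≤ max 1 (M ^ (N + 1)) * (n : ℝ) ^ ε := by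
        apply mul_le_mul_of_nonneg_right (le_max_right _ _) (by positivity)


lemma sum_w_one (α : ℝ) (n : ℕ) :
    ∑ k ∈ Finset.range (n + 1), (n.choose k : ℝ) * α ^ k * (1 - α) ^ (n - k) = 1 := by
  have h : (α + (1 - α)) ^ n = ∑ k ∈ Finset.range (n + 1),
      α ^ k * (1 - α) ^ (n - k) * (n.choose k : ℝ) := add_pow α (1 - α) n
  have h2 : ∑ k ∈ Finset.range (n + 1), (n.choose k : ℝ) * α ^ k * (1 - α) ^ (n - k)
      = (α + (1 - α)) ^ n := by
    rw [h]
    exact Finset.sum_congr rfl (fun k _ => by ring)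
  rw [h2]
  norm_num

def fb (b1 b2 : ℕ) (n : ℕ) : ℚ :=
  ∑ d ∈ n.divisors.filter (fun d => d ^ b1 ∣ n),
    (ArithmeticFunction.moebius d : ℚ) / (d : ℚ) ^ b2

theorem stmt_19 (b1 b2 : ℕ) (hb1 : 1 ≤ b1) (hb : b1 ≤ b2)
    (α : ℝ) (hα0 : 0 < α) (hα1 : α < 1) (ε : ℝ) (hε : 0 < ε) :
    ∃ C > 0, ∀ n : ℕ, 1 < n →
      (∑ k ∈ (range (n + 1)).filter
            (fun k : ℕ => gcdb b1 b2 (k : ℤ) ((n : ℤ) - (k : ℤ)) = 1),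
          (n.choose k : ℝ) * α ^ k * (1 - α) ^ (n - k))
        = (∑ k ∈ (range (n + 1)).filter
            (fun k : ℕ => gcdb b1 b2 (n : ℤ) ((n : ℤ) - (k : ℤ)) = 1),
          (n.choose k : ℝ) * α ^ k * (1 - α) ^ (n - k)) ∧
      |(∑ k ∈ (range (n + 1)).filter
            (fun k : ℕ => gcdb b1 b2 (n : ℤ) ((n : ℤ) - (k : ℤ)) = 1),
          (n.choose k : ℝ) * α ^ k * (1 - α) ^ (n - k)) - (fb b1 b2 n : ℝ)|
        ≤ C * (n : ℝ) ^ (-(1 : ℝ) / 2 + ε) := by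
  classical
  obtain ⟨C2, hC21, hC2⟩ := tau_bound hε
  have hβ : (0:ℝ) < 1 - α := by linarith
  set C1 : ℝ := 6 / Real.sqrt (8 * α * (1 - α)) with hC1
  have hC10 : 0 < C1 := by rw [hC1]; positivity
  have hC20 : 0 < C2 := by linarith
  refine ⟨C1 * C2, by positivity, fun n hn => ?_⟩
  have hn0 : 0 < n := by omega
  have hnr : (0:ℝ) < n := by exact_mod_cast hn0
  constructor
  · refine Finset.sum_congr ?_ (fun _ _ => rfl)
    apply Finset.filter_congr
    intro k _
    rw [gcdb_swap hb (n : ℤ) (k : ℤ)]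
  · set D := n.divisors.filter (fun d => d ^ b1 ∣ n) with hD
    have hdecomp := sum_decomp (n := n) hb1 hb hn0 α
    have hfb : ((fb b1 b2 n : ℚ) : ℝ)
        = ∑ d ∈ D, (ArithmeticFunction.moebius d : ℝ) * (1 / (d : ℝ) ^ b2) := by
      rw [fb]
      push_cast
      exact Finset.sum_congr rfl (fun d _ => by ring)
    rw [hdecomp, hfb, ← Finset.sum_sub_distrib]
    have hterm : ∀ d ∈ D,
        |(ArithmeticFunction.moebius d : ℝ) *
            (∑ k ∈ (Finset.range (n + 1)).filter (fun k : ℕ => d ^ b2 ∣ (n - k)),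
              (n.choose k : ℝ) * α ^ k * (1 - α) ^ (n - k))
          - (ArithmeticFunction.moebius d : ℝ) * (1 / (d : ℝ) ^ b2)|
        ≤ C1 / Real.sqrt n := by
      intro d hd
      rw [hD, Finset.mem_filter, Nat.mem_divisors] at hd
      have hd1 : 1 ≤ d := Nat.pos_of_dvd_of_pos hd.1.1 hn0
      rcases eq_or_lt_of_le hd1 with heq | hlt
      · -- d = 1
        subst heq
        have hfil : (Finset.range (n + 1)).filter (fun k : ℕ => 1 ^ b2 ∣ (n - k))
            = Finset.range (n + 1) := Finset.filter_true_of_mem (fun k _ => by simp)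
        rw [hfil, sum_w_one]
        simp only [ArithmeticFunction.moebius_apply_one]
        norm_num
        positivity
      · -- d ≥ 2
        have hb2 : 1 ≤ b2 := le_trans hb1 hb
        have hm2 : 2 ≤ d ^ b2 := le_trans hlt (Nat.le_self_pow (by omega) d)
        have hF := fourier_T hα0 hα1 n (d ^ b2) (by omega) hm2
        have hcast : ((d ^ b2 : ℕ) : ℝ) = (d : ℝ) ^ b2 := by push_cast; rfl
        rw [hcast] at hF
        have hmu : |(ArithmeticFunction.moebius d : ℝ)| ≤ 1 := by
          have := ArithmeticFunction.abs_moebius_le_one (n := d)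
          exact_mod_cast this
        calc |(ArithmeticFunction.moebius d : ℝ) *
              (∑ k ∈ (Finset.range (n + 1)).filter (fun k : ℕ => d ^ b2 ∣ (n - k)),
                (n.choose k : ℝ) * α ^ k * (1 - α) ^ (n - k))
            - (ArithmeticFunction.moebius d : ℝ) * (1 / (d : ℝ) ^ b2)|
            = |(ArithmeticFunction.moebius d : ℝ)| *
              |(∑ k ∈ (Finset.range (n + 1)).filter (fun k : ℕ => d ^ b2 ∣ (n - k)),
                (n.choose k : ℝ) * α ^ k * (1 - α) ^ (n - k)) - 1 / (d : ℝ) ^ b2| := by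
              rw [← abs_mul]
              congr 1
              ring
          _ ≤ 1 * (C1 / Real.sqrt n) := by
              apply mul_le_mul hmu hF (abs_nonneg _) (by norm_num)
          _ = C1 / Real.sqrt n := one_mul _
    calc |∑ d ∈ D, ((ArithmeticFunction.moebius d : ℝ) *
            (∑ k ∈ (Finset.range (n + 1)).filter (fun k : ℕ => d ^ b2 ∣ (n - k)),
              (n.choose k : ℝ) * α ^ k * (1 - α) ^ (n - k))
          - (ArithmeticFunction.moebius d : ℝ) * (1 / (d : ℝ) ^ b2))|
        ≤ ∑ d ∈ D, |(ArithmeticFunction.moebius d : ℝ) *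
            (∑ k ∈ (Finset.range (n + 1)).filter (fun k : ℕ => d ^ b2 ∣ (n - k)),
              (n.choose k : ℝ) * α ^ k * (1 - α) ^ (n - k))
          - (ArithmeticFunction.moebius d : ℝ) * (1 / (d : ℝ) ^ b2)| :=
          Finset.abs_sum_le_sum_abs _ _
      _ ≤ ∑ _d ∈ D, C1 / Real.sqrt n := Finset.sum_le_sum hterm
      _ = D.card * (C1 / Real.sqrt n) := by rw [Finset.sum_const, nsmul_eq_mul]
      _ ≤ (C2 * (n : ℝ) ^ ε) * (C1 / Real.sqrt n) := by
          apply mul_le_mul_of_nonneg_right _ (by positivity)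
          calc (D.card : ℝ) ≤ (n.divisors.card : ℝ) := by
                exact_mod_cast Finset.card_le_card (Finset.filter_subset _ _)
            _ ≤ C2 * (n : ℝ) ^ ε := hC2 n hn0.ne'
      _ = C1 * C2 * ((n : ℝ) ^ ε / (n : ℝ) ^ ((1:ℝ)/2)) := by
          rw [Real.sqrt_eq_rpow]
          ring
      _ = C1 * C2 * (n : ℝ) ^ (-(1 : ℝ) / 2 + ε) := by
          rw [← Real.rpow_sub hnr]
          congr 1
          ring
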